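/- The symmetric subspace S = {x : Tx = x} satisfies S = (L⊥ ∩ K) + (K⊥ ∩ L); moreover S ∩ K = L⊥ ∩ K and S ∩ L = K⊥ ∩ L. -/

import Mathlib

theorem stmt_16 {V : Type*} [NormedAddCommGroup V] [InnerProductSpace ℝ V] [CompleteSpace V]
    (K L : Submodule ℝ V) (hKc : IsClosed (K : Set V)) (hLc : IsClosed (L : Set V))
    (hsup : K ⊔ L = ⊤) (hinf : K ⊓ L = ⊥)
    (P Q : V →L[ℝ] V) (hPsa : IsSelfAdjoint P) (hQsa : IsSelfAdjoint Q)
    (hPK : ∀ x, P x ∈ K) (hPfix : ∀ x ∈ K, P x = x)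
    (hQL : ∀ x, Q x ∈ L) (hQfix : ∀ x ∈ L, Q x = x)
    (T : V →L[ℝ] V) (hT : T.IsPositive) (hT2 : T * T = (P - Q) * (P - Q)) :
    LinearMap.ker ((T - 1 : V →L[ℝ] V) : V →ₗ[ℝ] V) = (Lᗮ ⊓ K) ⊔ (Kᗮ ⊓ L) ∧
    LinearMap.ker ((T - 1 : V →L[ℝ] V) : V →ₗ[ℝ] V) ⊓ K = Lᗮ ⊓ K ∧
    LinearMap.ker ((T - 1 : V →L[ℝ] V) : V →ₗ[ℝ] V) ⊓ L = Kᗮ ⊓ L := by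
  have hPP : ∀ x, P (P x) = P x := fun x => hPfix _ (hPK x)
  have hQQ : ∀ x, Q (Q x) = Q x := fun x => hQfix _ (hQL x)
  -- the auxiliary operator A = 1 - P - Q
  set A : V →L[ℝ] V := 1 - P - Q with hA
  have hAsa : IsSelfAdjoint A := ((IsSelfAdjoint.one _).sub hPsa).sub hQsa
  have hAsym := hAsa.isSymmetric
  have hPsym := hPsa.isSymmetric
  have hQsym := hQsa.isSymmetric
  have hAx : ∀ x, A x = x - P x - Q x := by
    intro x
    simp [hA, ContinuousLinearMap.sub_apply]
  -- key algebraic identity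
  have hkey : ∀ x, (P - Q) ((P - Q) x) + A (A x) = x := by
    intro x
    simp only [ContinuousLinearMap.sub_apply, map_sub, hAx, hPP, hQQ]
    abel
  -- kernel of Q is Lᗮ
  have hQker : ∀ x, Q x = 0 ↔ x ∈ Lᗮ := by
    intro x
    constructor
    · intro h u hu
      have : inner ℝ (Q u) x = (inner ℝ u (Q x) : ℝ) := hQsym u x
      rwa [hQfix u hu, h, inner_zero_right] at this
    · intro h
      have h1 : (inner ℝ (Q x) (Q x) : ℝ) = inner ℝ (Q (Q x)) x := (hQsym (Q x) x).symm
      rw [hQQ] at h1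
      have h2 : (inner ℝ (Q x) x : ℝ) = 0 := h (Q x) (hQL x)
      rw [h2] at h1
      exact inner_self_eq_zero.mp h1
  have hPker : ∀ x, P x = 0 ↔ x ∈ Kᗮ := by
    intro x
    constructor
    · intro h u hu
      have : inner ℝ (P u) x = (inner ℝ u (P x) : ℝ) := hPsym u x
      rwa [hPfix u hu, h, inner_zero_right] at this
    · intro h
      have h1 : (inner ℝ (P x) (P x) : ℝ) = inner ℝ (P (P x)) x := (hPsym (P x) x).symm
      rw [hPP] at h1
      have h2 : (inner ℝ (P x) x : ℝ) = 0 := h (P x) (hPK x)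
      rw [h2] at h1
      exact inner_self_eq_zero.mp h1
  -- characterization of the eigenspace: T x = x ↔ P x + Q x = x
  have hchar : ∀ x, T x = x ↔ P x + Q x = x := by
    intro x
    constructor
    · intro hTx
      have hPQ2 : (P - Q) ((P - Q) x) = x := by
        have h := congrFun (congrArg DFunLike.coe hT2) x
        simp only [ContinuousLinearMap.mul_apply] at h
        rw [← h, hTx, hTx]
      have hAA : A (A x) = 0 := by
        have h := hkey x
        rw [hPQ2] at h
        exact add_eq_left.mp h
      have hAzero : A x = 0 := by
        have h1 : (inner ℝ (A (A x)) x : ℝ) = inner ℝ (A x) (A x) := hAsym (A x) x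
        rw [hAA, inner_zero_left] at h1
        exact inner_self_eq_zero.mp h1.symm
      have := hAx x
      rw [hAzero, sub_sub] at this
      exact (sub_eq_zero.mp this.symm).symm
    · intro h
      have hAzero : A x = 0 := by rw [hAx, sub_sub, h, sub_self]
      have hPQ2 : (P - Q) ((P - Q) x) = x := by
        have hk := hkey x
        rw [hAzero, map_zero, add_zero] at hk
        exact hk
      have hTT : T (T x) = x := by
        have h' := congrFun (congrArg DFunLike.coe hT2) x
        simp only [ContinuousLinearMap.mul_apply] at h'
        rw [h', hPQ2]
      set y := T x - x with hy
      have hTy : T y = -y := by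
        rw [hy, map_sub, hTT]
        abel
      have hnn : 0 ≤ (inner ℝ (T y) y : ℝ) := by
        have := hT.inner_nonneg_left y
        simpa using this
      rw [hTy, inner_neg_left, neg_nonneg] at hnn
      have hy0 : y = 0 := real_inner_self_nonpos.mp hnn
      have : T x = x := by
        have := hy ▸ hy0
        exact sub_eq_zero.mp this
      exact this
  have hmem : ∀ x, x ∈ LinearMap.ker ((T - 1 : V →L[ℝ] V) : V →ₗ[ℝ] V) ↔ P x + Q x = x := by
    intro x
    simp only [LinearMap.mem_ker, ContinuousLinearMap.coe_coe, ContinuousLinearMap.coe_sub', Pi.sub_apply,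
      ContinuousLinearMap.one_apply, sub_eq_zero]
    exact hchar x
  refine ⟨?_, ?_, ?_⟩
  · apply le_antisymm
    · intro x hx
      have hxe : P x + Q x = x := (hmem x).mp hx
      have hQP : Q (P x) = 0 := by
        have := congrArg Q hxe
        rw [map_add, hQQ] at this
        exact add_eq_right.mp this
      have hPQ : P (Q x) = 0 := by
        have := congrArg P hxe
        rw [map_add, hPP] at this
        have := add_eq_left.mp this
        exact this
      have h1 : P x ∈ Lᗮ ⊓ K := ⟨(hQker (P x)).mp hQP, hPK x⟩
      have h2 : Q x ∈ Kᗮ ⊓ L := ⟨(hPker (Q x)).mp hPQ, hQL x⟩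
      rw [← hxe]
      exact Submodule.add_mem_sup h1 h2
    · apply sup_le
      · intro x hx
        obtain ⟨hxL, hxK⟩ := hx
        apply (hmem x).mpr
        rw [hPfix x hxK, (hQker x).mpr hxL, add_zero]
      · intro x hx
        obtain ⟨hxK, hxL⟩ := hx
        apply (hmem x).mpr
        rw [hQfix x hxL, (hPker x).mpr hxK, zero_add]
  · ext x
    simp only [Submodule.mem_inf]
    constructor
    · rintro ⟨hx, hxK⟩
      have hxe : P x + Q x = x := (hmem x).mp hx
      rw [hPfix x hxK] at hxe
      have : Q x = 0 := add_eq_left.mp hxe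
      exact ⟨(hQker x).mp this, hxK⟩
    · rintro ⟨hxL, hxK⟩
      refine ⟨(hmem x).mpr ?_, hxK⟩
      rw [hPfix x hxK, (hQker x).mpr hxL, add_zero]
  · ext x
    simp only [Submodule.mem_inf]
    constructor
    · rintro ⟨hx, hxL⟩
      have hxe : P x + Q x = x := (hmem x).mp hx
      rw [hQfix x hxL] at hxe
      have : P x = 0 := by
        rw [add_comm] at hxe
        exact add_eq_left.mp hxe
      exact ⟨(hPker x).mp this, hxL⟩
    · rintro ⟨hxK, hxL⟩
      refine ⟨(hmem x).mpr ?_, hxL⟩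
      rw [hQfix x hxL, (hPker x).mpr hxK, zero_add]
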